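/- There exist positive finite constants c_1 ≤ c_2 such that for every n ∈ ℕ and every L with 0 < L ≤ 3^n/2: c_1 ≤ (2L+1)^{ln 2/ln 3} / (2^n·(1 − e^{-L/3^n})) · ∫_{C_n(L)} e^{-r} dr ≤ c_2. (With L = πR^2, this is a two-sided asymptotic estimate for the first eigenvalue λ_0(𝒞_n(R)) = ∫_{C_n(πR^2)} e^{-r} dr.) -/

import Mathlib

open Real MeasureTheory

/-- The `n`-iterate mid-third Cantor set based in `[0, L]`:
`C₀(L) = [0,L]` and `C_{n+1}(L) = (1/3)·C_n(L) ∪ (2L/3 + (1/3)·C_n(L))`. -/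
def cantorIterate : ℕ → ℝ → Set ℝ
  | 0, L => Set.Icc 0 L
  | n + 1, L =>
      (fun x => x / 3) '' cantorIterate n L ∪
        (fun x => 2 * L / 3 + x / 3) '' cantorIterate n L

lemma cantor_subset (n : ℕ) (L : ℝ) (hL : 0 ≤ L) : cantorIterate n L ⊆ Set.Icc 0 L := by
  induction n with
  | zero => exact le_refl _
  | succ n ih =>
    rintro y (⟨x, hx, rfl⟩ | ⟨x, hx, rfl⟩) <;>
    · obtain ⟨h1, h2⟩ := ih hx
      constructor <;> simp only [] <;> nlinarith

lemma image_div3 (S : Set ℝ) : (fun x : ℝ => x / 3) '' S = (fun y : ℝ => 3 * y) ⁻¹' S := by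
  ext y
  constructor
  · rintro ⟨x, hx, rfl⟩; simpa [mul_div_cancel₀] using hx
  · intro hy; exact ⟨3 * y, hy, by ring⟩

lemma image_aff (c : ℝ) (S : Set ℝ) :
    (fun x : ℝ => c + x / 3) '' S = (fun y : ℝ => 3 * y - 3 * c) ⁻¹' S := by
  ext y
  constructor
  · rintro ⟨x, hx, rfl⟩
    have : 3 * (c + x / 3) - 3 * c = x := by ring
    simpa [this] using hx
  · intro hy; exact ⟨3 * y - 3 * c, hy, by ring⟩

lemma cantor_measurable (n : ℕ) (L : ℝ) : MeasurableSet (cantorIterate n L) := by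
  induction n with
  | zero => exact measurableSet_Icc
  | succ n ih =>
    refine MeasurableSet.union ?_ ?_
    · rw [image_div3]; exact ih.preimage (by fun_prop)
    · rw [image_aff]; exact ih.preimage (by fun_prop)

lemma cantor_integrable (n : ℕ) (L : ℝ) (hL : 0 ≤ L) (f : ℝ → ℝ) (hf : Continuous f) :
    IntegrableOn f (cantorIterate n L) := by
  exact (hf.integrableOn_Icc (a := 0) (b := L)).mono_set (cantor_subset n L hL)

lemma integral_exp_Icc (a t : ℝ) (ha : 0 ≤ a) (ht : 0 < t) :
    ∫ r in Set.Icc 0 a, Real.exp (-(t * r)) = (1 - Real.exp (-(t * a))) / t := by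
  rw [MeasureTheory.integral_Icc_eq_integral_Ioc, ← intervalIntegral.integral_of_le ha]
  have : ∀ x ∈ Set.uIcc 0 a, HasDerivAt (fun r => -Real.exp (-(t * r)) / t)
      (Real.exp (-(t * x))) x := by
    intro x _
    have h1 : HasDerivAt (fun r : ℝ => -(t * r)) (-t) x := by
      simpa using ((hasDerivAt_id x).const_mul (-t))
    have h2 := (h1.exp).neg.div_const t
    exact h2.congr_deriv (by rw [div_eq_iff ht.ne']; ring)
  rw [intervalIntegral.integral_eq_sub_of_hasDerivAt this
    ((Real.continuous_exp.comp (by fun_prop)).intervalIntegrable 0 a)]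
  simp [mul_zero, Real.exp_zero]
  ring

lemma cantor_integral (n : ℕ) : ∀ L t : ℝ, 0 < L → 0 < t →
    ∫ r in cantorIterate n L, Real.exp (-(t * r)) =
      (1 - Real.exp (-(t * L / 3 ^ n))) / t *
        ∏ k ∈ Finset.range n, (1 + Real.exp (-(2 * t * L / 3 ^ (k + 1)))) := by
  induction n with
  | zero =>
    intro L t hL ht
    simpa [cantorIterate, mul_div_assoc] using integral_exp_Icc L t hL.le ht
  | succ n ih =>
    intro L t hL ht
    have hms := cantor_measurable n L
    have hsub := cantor_subset n L hL.le
    set S := cantorIterate n L with hS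
    have hA : ∫ r in (fun x => x / 3) '' S, Real.exp (-(t * r))
        = ∫ x in S, |(1:ℝ)/3| • Real.exp (-(t * (x / 3))) := by
      apply integral_image_eq_integral_abs_deriv_smul hms
      · intro x _
        simpa using (hasDerivWithinAt_id x S).div_const 3
      · intro a _ b _ h; field_simp at h; exact h
    have hB : ∫ r in (fun x => 2 * L / 3 + x / 3) '' S, Real.exp (-(t * r))
        = ∫ x in S, |(1:ℝ)/3| • Real.exp (-(t * (2 * L / 3 + x / 3))) := by
      apply integral_image_eq_integral_abs_deriv_smul hms
      · intro x _
        simpa using ((hasDerivWithinAt_id x S).div_const 3).const_add (2 * L / 3)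
      · intro a _ b _ h; field_simp at h; linarith
    have hdisj : Disjoint ((fun x => x / 3) '' S) ((fun x => 2 * L / 3 + x / 3) '' S) := by
      rw [Set.disjoint_left]
      rintro y ⟨x, hx, rfl⟩ ⟨x', hx', he⟩
      have h1 := (hsub hx).2
      have h2 := (hsub hx').1
      simp only at he
      nlinarith
    have hmB : MeasurableSet ((fun x => 2 * L / 3 + x / 3) '' S) := by
      rw [image_aff]; exact hms.preimage (by fun_prop)
    have hintA : IntegrableOn (fun r => Real.exp (-(t * r))) ((fun x => x / 3) '' S) := by
      apply (((Real.continuous_exp.comp (by fun_prop)).integrableOn_Icc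
        (a := 0) (b := L))).mono_set
      exact (Set.image_mono hsub).trans (by
        rintro y ⟨x, ⟨hx1, hx2⟩, rfl⟩; constructor <;> simp only [] <;> nlinarith)
    have hintB : IntegrableOn (fun r => Real.exp (-(t * r)))
        ((fun x => 2 * L / 3 + x / 3) '' S) := by
      apply (((Real.continuous_exp.comp (by fun_prop)).integrableOn_Icc
        (a := 0) (b := L))).mono_set
      exact (Set.image_mono hsub).trans (by
        rintro y ⟨x, ⟨hx1, hx2⟩, rfl⟩; constructor <;> simp only [] <;> nlinarith)
    rw [show cantorIterate (n+1) L = (fun x => x / 3) '' S ∪ (fun x => 2 * L / 3 + x / 3) '' S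
      from rfl, setIntegral_union hdisj hmB hintA hintB, hA, hB]
    have hG := ih L (t / 3) hL (by linarith)
    have hI1 : ∫ x in S, |(1:ℝ)/3| • Real.exp (-(t * (x / 3)))
        = (1/3) * ∫ x in S, Real.exp (-(t / 3 * x)) := by
      rw [← MeasureTheory.integral_const_mul]
      apply setIntegral_congr_fun hms
      intro x _
      simp only [smul_eq_mul]
      rw [abs_of_nonneg (by norm_num : (0:ℝ) ≤ 1/3)]
      congr 1
      ring
    have hI2 : ∫ x in S, |(1:ℝ)/3| • Real.exp (-(t * (2 * L / 3 + x / 3)))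
        = (1/3 * Real.exp (-(2 * t * L / 3))) * ∫ x in S, Real.exp (-(t / 3 * x)) := by
      rw [← MeasureTheory.integral_const_mul]
      apply setIntegral_congr_fun hms
      intro x _
      simp only [smul_eq_mul, mul_assoc, ← Real.exp_add]
      rw [abs_of_nonneg (by norm_num : (0:ℝ) ≤ 1/3)]
      congr 1
      ring
    rw [hI1, hI2, hG, Finset.prod_range_succ']
    have hprod : ∀ k ∈ Finset.range n,
        (1 + Real.exp (-(2 * (t / 3) * L / 3 ^ (k + 1))))
          = (1 + Real.exp (-(2 * t * L / 3 ^ (k + 1 + 1)))) := by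
      intro k _
      congr 2
      rw [pow_succ]
      ring
    rw [Finset.prod_congr rfl hprod]
    have harg : t / 3 * L / 3 ^ n = t * L / 3 ^ (n + 1) := by
      rw [pow_succ]; ring
    rw [harg, show (2:ℝ) * t * L / 3 ^ (0 + 1) = 2 * t * L / 3 by norm_num]
    field_simp

lemma rpow_alpha (j : ℕ) : ((3:ℝ)^j) ^ (Real.log 2 / Real.log 3) = 2^j := by
  have h32 : (3:ℝ) ^ (Real.log 2 / Real.log 3) = 2 := by
    rw [show Real.log 2 / Real.log 3 = Real.logb 3 2 from rfl]
    exact Real.rpow_logb (by norm_num) (by norm_num) (by norm_num)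
  rw [← Real.rpow_natCast 3 j, ← Real.rpow_mul (by norm_num), mul_comm,
    Real.rpow_mul (by norm_num), Real.rpow_natCast, h32]

lemma key_bounds (n : ℕ) (L : ℝ) (hL : 0 < L) (hLn : L ≤ 3 ^ n / 2) :
    Real.exp (-(3/2)) ≤ (2*L+1) ^ (Real.log 2 / Real.log 3) *
      ∏ k ∈ Finset.range n, ((1 + Real.exp (-(2*L/3^(k+1))))/2) ∧
    (2*L+1) ^ (Real.log 2 / Real.log 3) *
      ∏ k ∈ Finset.range n, ((1 + Real.exp (-(2*L/3^(k+1))))/2) ≤ 4 * Real.exp (3/2) := by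
  set α := Real.log 2 / Real.log 3 with hα
  have hα0 : 0 ≤ α := by
    apply div_nonneg (Real.log_nonneg (by norm_num)) (Real.log_nonneg (by norm_num))
  set m := Nat.log 3 ⌊2*L⌋₊ with hm
  set g : ℕ → ℝ := fun k => (1 + Real.exp (-(2*L/3^(k+1))))/2 with hg
  -- basic facts
  have h2 : 2*L < (3:ℝ)^(m+1) := by
    have ha : 2*L < (⌊2*L⌋₊ : ℝ) + 1 := Nat.lt_floor_add_one _
    have hb : ⌊2*L⌋₊ + 1 ≤ 3^(m+1) :=
      Nat.lt_pow_succ_log_self (by norm_num) ⌊2*L⌋₊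
    calc 2*L < (⌊2*L⌋₊ : ℝ) + 1 := ha
    _ ≤ ((3^(m+1) : ℕ) : ℝ) := by exact_mod_cast hb
    _ = (3:ℝ)^(m+1) := by push_cast; ring
  have h3 : m ≤ n := by
    have hfl : ⌊2*L⌋₊ ≤ 3^n := by
      have : (2:ℝ)*L ≤ ((3^n : ℕ) : ℝ) := by push_cast; linarith
      calc ⌊2*L⌋₊ ≤ ⌊((3^n : ℕ) : ℝ)⌋₊ := Nat.floor_mono this
      _ = 3^n := Nat.floor_natCast _
    calc m ≤ Nat.log 3 (3^n) := Nat.log_mono_right hfl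
    _ = n := Nat.log_pow (by norm_num) n
  have h1 : (3:ℝ)^m ≤ 2*L + 1 := by
    rcases eq_or_ne ⌊2*L⌋₊ 0 with h0 | h0
    · simp [hm, h0, Nat.log_zero_right]; linarith
    · have := Nat.pow_log_le_self 3 h0
      have hc : ((3^m : ℕ) : ℝ) ≤ (⌊2*L⌋₊ : ℝ) := by exact_mod_cast this
      have hd : (⌊2*L⌋₊ : ℝ) ≤ 2*L := Nat.floor_le (by linarith)
      have : ((3^m : ℕ) : ℝ) = (3:ℝ)^m := by push_cast; ring
      linarith [this ▸ hc]
  have h4 : 1 ≤ m → (3:ℝ)^m ≤ 2*L := by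
    intro hm1
    have h0 : ⌊2*L⌋₊ ≠ 0 := by
      intro h
      rw [hm, h, Nat.log_zero_right] at hm1
      omega
    have := Nat.pow_log_le_self 3 h0
    have hc : ((3^m : ℕ) : ℝ) ≤ (⌊2*L⌋₊ : ℝ) := by exact_mod_cast this
    have hd : (⌊2*L⌋₊ : ℝ) ≤ 2*L := Nat.floor_le (by linarith)
    have he : ((3^m : ℕ) : ℝ) = (3:ℝ)^m := by push_cast; ring
    linarith [he ▸ hc]
  have hgpos : ∀ k, 0 < g k := by
    intro k
    have := Real.exp_pos (-(2*L/3^(k+1)))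
    simp only [hg]
    linarith
  -- split the product
  have hsplit : ∏ k ∈ Finset.range n, g k =
      (∏ k ∈ Finset.range m, g k) * ∏ k ∈ Finset.Ico m n, g k :=
    (Finset.prod_range_mul_prod_Ico g h3).symm
  -- geometric sums
  have hgeo1 : ∑ k ∈ Finset.Ico m n, 2*L/3^(k+1) ≤ 3/2 := by
    have step : ∀ k ∈ Finset.Ico m n, 2*L/3^(k+1) ≤ (1/3:ℝ)^(k-m) := by
      intro k hk
      rw [Finset.mem_Ico] at hk
      have hkm : m ≤ k := hk.1
      have hpw : (3:ℝ)^(k+1) = 3^(k-m) * 3^(m+1) := by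
        rw [← pow_add]; congr 1; omega
      have heq : (1/3:ℝ)^(k-m) = (3:ℝ)^(m+1)/3^(k+1) := by
        rw [hpw, one_div, inv_pow]
        field_simp
      rw [heq]
      gcongr
    calc ∑ k ∈ Finset.Ico m n, 2*L/3^(k+1) ≤ ∑ k ∈ Finset.Ico m n, (1/3:ℝ)^(k-m) :=
        Finset.sum_le_sum step
    _ = ∑ j ∈ Finset.range (n - m), (1/3:ℝ)^j := by
        rw [Finset.sum_Ico_eq_sum_range]
        apply Finset.sum_congr rfl
        intro j _
        congr 1
        omega
    _ = ((1/3:ℝ)^(n-m) - 1)/((1/3) - 1) := geom_sum_eq (by norm_num) _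
    _ ≤ 3/2 := by
        have h1' : (0:ℝ) ≤ (1/3:ℝ)^(n-m) := by positivity
        have h2' : (1/3:ℝ)^(n-m) ≤ 1 := pow_le_one₀ (by norm_num) (by norm_num)
        rw [div_le_iff_of_neg (by norm_num)]
        linarith
  have hgeo2 : ∑ k ∈ Finset.range m, (3:ℝ)^(k+1)/3^m ≤ 3/2 := by
    have hs : ∑ k ∈ Finset.range m, (3:ℝ)^(k+1)
        = (((3:ℝ)^m - 1)/(3-1)) * 3 := by
      simp only [pow_succ, ← Finset.sum_mul,
        geom_sum_eq (show (3:ℝ) ≠ 1 by norm_num)]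
    rw [← Finset.sum_div, hs, div_le_iff₀ (by positivity)]
    have hp : (0:ℝ) < 3^m := by positivity
    nlinarith
  constructor
  · -- lower bound
    have hP1 : (1/2:ℝ)^m ≤ ∏ k ∈ Finset.range m, g k := by
      have : ∏ k ∈ Finset.range m, (1/2:ℝ) ≤ ∏ k ∈ Finset.range m, g k := by
        apply Finset.prod_le_prod (fun k _ => by norm_num)
        intro k _
        have := (Real.exp_pos (-(2*L/3^(k+1)))).le
        simp only [hg]
        linarith
      simpa [Finset.prod_const] using this
    have hP2 : Real.exp (-(3/2)) ≤ ∏ k ∈ Finset.Ico m n, g k := by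
      calc Real.exp (-(3/2)) ≤ Real.exp (∑ k ∈ Finset.Ico m n, -(2*L/3^(k+1))) := by
            apply Real.exp_le_exp.2
            rw [Finset.sum_neg_distrib]
            linarith [hgeo1]
      _ = ∏ k ∈ Finset.Ico m n, Real.exp (-(2*L/3^(k+1))) := Real.exp_sum _ _
      _ ≤ ∏ k ∈ Finset.Ico m n, g k := by
            apply Finset.prod_le_prod (fun k _ => (Real.exp_pos _).le)
            intro k _
            have hx : Real.exp (-(2*L/3^(k+1))) ≤ 1 :=
              Real.exp_le_one_iff.mpr (neg_nonpos.mpr (by positivity))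
            simp only [hg]
            linarith
    have hA : (2:ℝ)^m ≤ (2*L+1)^α := by
      calc (2:ℝ)^m = ((3:ℝ)^m)^α := (rpow_alpha m).symm
      _ ≤ (2*L+1)^α := Real.rpow_le_rpow (by positivity) h1 hα0
    calc Real.exp (-(3/2)) = (2:ℝ)^m * ((1/2)^m * Real.exp (-(3/2))) := by
          rw [← mul_assoc, ← mul_pow]; norm_num
    _ ≤ (2*L+1)^α * ∏ k ∈ Finset.range n, g k := by
        apply mul_le_mul hA _ (by positivity) (by positivity)
        rw [hsplit]
        exact mul_le_mul hP1 hP2 (by positivity) ((Finset.prod_pos (fun k _ => hgpos k)).le)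
  · -- upper bound
    have hP2 : ∏ k ∈ Finset.Ico m n, g k ≤ 1 := by
      apply Finset.prod_le_one (fun k _ => (hgpos k).le)
      intro k _
      have hx : Real.exp (-(2*L/3^(k+1))) ≤ 1 :=
        Real.exp_le_one_iff.mpr (neg_nonpos.mpr (by positivity))
      simp only [hg]
      linarith
    have hP1 : ∏ k ∈ Finset.range m, g k ≤ (1/2:ℝ)^m * Real.exp (3/2) := by
      have step : ∀ k ∈ Finset.range m, g k ≤ (1/2:ℝ) * Real.exp (Real.exp (-(2*L/3^(k+1)))) := by
        intro k _
        simp only [hg]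
        have := Real.add_one_le_exp (Real.exp (-(2*L/3^(k+1))))
        linarith
      calc ∏ k ∈ Finset.range m, g k
          ≤ ∏ k ∈ Finset.range m, ((1/2:ℝ) * Real.exp (Real.exp (-(2*L/3^(k+1))))) :=
            Finset.prod_le_prod (fun k _ => (hgpos k).le) step
      _ = (1/2:ℝ)^m * Real.exp (∑ k ∈ Finset.range m, Real.exp (-(2*L/3^(k+1)))) := by
          rw [Finset.prod_mul_distrib, Finset.prod_const, Finset.card_range, Real.exp_sum]
      _ ≤ (1/2:ℝ)^m * Real.exp (3/2) := by
          apply mul_le_mul_of_nonneg_left _ (by positivity)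
          apply Real.exp_le_exp.2
          have hsum : ∀ k ∈ Finset.range m, Real.exp (-(2*L/3^(k+1))) ≤ (3:ℝ)^(k+1)/3^m := by
            intro k hk
            rw [Finset.mem_range] at hk
            have h2L : (3:ℝ)^m ≤ 2*L := h4 (by omega)
            have hx : (0:ℝ) < 2*L/3^(k+1) := by positivity
            have hxe : 2*L/3^(k+1) ≤ Real.exp (2*L/3^(k+1)) := by
              linarith [Real.add_one_le_exp (2*L/3^(k+1))]
            calc Real.exp (-(2*L/3^(k+1))) = (Real.exp (2*L/3^(k+1)))⁻¹ := by
                  rw [Real.exp_neg]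
            _ ≤ (2*L/3^(k+1))⁻¹ := by
                  apply inv_anti₀ hx hxe
            _ = 3^(k+1)/(2*L) := by rw [inv_div]
            _ ≤ 3^(k+1)/3^m := by gcongr
          calc ∑ k ∈ Finset.range m, Real.exp (-(2*L/3^(k+1)))
              ≤ ∑ k ∈ Finset.range m, (3:ℝ)^(k+1)/3^m := Finset.sum_le_sum hsum
          _ ≤ 3/2 := hgeo2
    have hA : (2*L+1)^α ≤ (2:ℝ)^(m+2) := by
      have hb : 2*L+1 ≤ (3:ℝ)^(m+2) := by
        have : (1:ℝ) ≤ (3:ℝ)^(m+1) := one_le_pow₀ (by norm_num)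
        rw [pow_succ]
        nlinarith
      calc (2*L+1)^α ≤ ((3:ℝ)^(m+2))^α := Real.rpow_le_rpow (by positivity) hb hα0
      _ = 2^(m+2) := rpow_alpha (m+2)
    calc (2*L+1)^α * ∏ k ∈ Finset.range n, g k
        ≤ (2:ℝ)^(m+2) * ((1/2:ℝ)^m * Real.exp (3/2)) := by
          apply mul_le_mul hA _ (by positivity) (by positivity)
          rw [hsplit]
          calc (∏ k ∈ Finset.range m, g k) * ∏ k ∈ Finset.Ico m n, g k
              ≤ ((1/2:ℝ)^m * Real.exp (3/2)) * 1 := by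
                apply mul_le_mul hP1 hP2 ((Finset.prod_pos (fun k _ => hgpos k)).le) (by positivity)
          _ = (1/2:ℝ)^m * Real.exp (3/2) := by ring
    _ = 4 * Real.exp (3/2) := by
        have h24 : (2:ℝ)^(m+2) * (1/2)^m = 4 := by
          rw [pow_add, mul_comm ((2:ℝ)^m) ((2:ℝ)^2), mul_assoc, ← mul_pow]
          norm_num
        rw [← mul_assoc, h24]

/-- Two-sided asymptotic estimate for the first eigenvalue
`λ₀ = ∫_{C_n(L)} e^{-r} dr`: uniformly in `n` and `0 < L ≤ 3ⁿ/2`,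
`λ₀ ≍ 2ⁿ(1-e^{-L/3ⁿ})·(2L+1)^{-ln2/ln3}`. -/
theorem cantor_first_eigenvalue_asymptotics :
    ∃ c₁ c₂ : ℝ, 0 < c₁ ∧ c₁ ≤ c₂ ∧
      ∀ n : ℕ, ∀ L : ℝ, 0 < L → L ≤ 3 ^ n / 2 →
        c₁ ≤ (2 * L + 1) ^ (Real.log 2 / Real.log 3) /
            (2 ^ n * (1 - Real.exp (-(L / 3 ^ n)))) *
            (∫ r in cantorIterate n L, Real.exp (-r)) ∧
        (2 * L + 1) ^ (Real.log 2 / Real.log 3) /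
            (2 ^ n * (1 - Real.exp (-(L / 3 ^ n)))) *
            (∫ r in cantorIterate n L, Real.exp (-r)) ≤ c₂ := by
  refine ⟨Real.exp (-(3/2)), 4 * Real.exp (3/2), Real.exp_pos _, ?_, ?_⟩
  · have h1 : Real.exp (-(3/2)) ≤ 1 := Real.exp_le_one_iff.mpr (by norm_num)
    have h2 : (1:ℝ) ≤ Real.exp (3/2) := Real.one_le_exp (by norm_num)
    linarith
  · intro n L hL hLn
    have hI : ∫ r in cantorIterate n L, Real.exp (-r)
        = (1 - Real.exp (-(L / 3^n))) *
          ∏ k ∈ Finset.range n, (1 + Real.exp (-(2*L/3^(k+1)))) := by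
      have h := cantor_integral n L 1 hL one_pos
      simpa using h
    have hE : Real.exp (-(L/3^n)) < 1 :=
      Real.exp_lt_one_iff.mpr (neg_lt_zero.mpr (by positivity))
    have hne1 : (1:ℝ) - Real.exp (-(L/3^n)) ≠ 0 := by linarith
    have hne2 : (2:ℝ)^n ≠ 0 := by positivity
    have hQ : (2 * L + 1) ^ (Real.log 2 / Real.log 3) /
            (2 ^ n * (1 - Real.exp (-(L / 3 ^ n)))) *
            (∫ r in cantorIterate n L, Real.exp (-r))
        = (2*L+1) ^ (Real.log 2 / Real.log 3) *
          ∏ k ∈ Finset.range n, ((1 + Real.exp (-(2*L/3^(k+1))))/2) := by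
      have halg : ∀ X P c d : ℝ, c ≠ 0 → d ≠ 0 →
          X / (c * d) * (d * P) = X * (P / c) := by
        intros X P c d hc hd
        field_simp
      rw [hI, Finset.prod_div_distrib, Finset.prod_const, Finset.card_range]
      exact halg _ _ _ _ hne2 hne1
    rw [hQ]
    exact key_bounds n L hL hLn
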